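/- The vector field F₁(x,y,z) = (−y², xy, 0) on ℝ³ admits the positive-definite first integral I(x,y,z) = x² + y² + z²; consequently all its integral curves are bounded and F₁ is a complete vector field. -/

import Mathlib

/-- The geodesic field `F₁` on `aff(ℝ) ⊕ ℝ` (`λ = 0`): `(−y², xy, 0)`. -/
def F1aff (v : Fin 3 → ℝ) : Fin 3 → ℝ := ![-(v 1) ^ 2, v 0 * v 1, 0]

open Real in
/-- The explicit solution family for `F1aff`. -/
lemma sol_hasDerivAt (a b e z0 : ℝ) (he : e ^ 2 = a ^ 2) (t : ℝ) :
    HasDerivAt (fun t => (![-a * (sinh (a*t+b) / cosh (a*t+b)),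
        e / cosh (a*t+b), z0] : Fin 3 → ℝ))
      (F1aff ![-a * (sinh (a*t+b) / cosh (a*t+b)), e / cosh (a*t+b), z0]) t := by
  have hu : HasDerivAt (fun t : ℝ => a*t+b) a t := by
    simpa using ((hasDerivAt_id t).const_mul a).add_const b
  have hC : Real.cosh (a*t+b) ≠ 0 := (Real.cosh_pos _).ne'
  have hs : HasDerivAt (fun t : ℝ => sinh (a*t+b)) (cosh (a*t+b) * a) t :=
    (Real.hasDerivAt_sinh _).comp t hu
  have hc : HasDerivAt (fun t : ℝ => cosh (a*t+b)) (sinh (a*t+b) * a) t :=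
    (Real.hasDerivAt_cosh _).comp t hu
  have h1 : cosh (a*t+b) ^ 2 - sinh (a*t+b) ^ 2 = 1 := Real.cosh_sq_sub_sinh_sq _
  rw [hasDerivAt_pi]
  intro i
  fin_cases i
  · have := ((hs.fun_div hc hC).const_mul (-a))
    simp only [F1aff, Matrix.cons_val_zero, Matrix.cons_val_one, Matrix.head_cons]
    refine this.congr_deriv ?_
    simp only [Fin.zero_eta, Fin.mk_one, Matrix.cons_val_zero, Matrix.cons_val_one, Matrix.head_cons]
    field_simp
    nlinarith [he, h1]
  · have := (hasDerivAt_const t e).fun_div hc hC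
    simp only [F1aff, Matrix.cons_val_zero, Matrix.cons_val_one, Matrix.head_cons]
    refine this.congr_deriv ?_
    simp only [Fin.zero_eta, Fin.mk_one, Matrix.cons_val_zero, Matrix.cons_val_one, Matrix.head_cons]
    field_simp
    ring
  · simpa [F1aff] using hasDerivAt_const t z0

/-- `I = x² + y² + z²` is a (positive-definite) first integral of `F₁`;
consequently all integral curves are bounded and `F₁` is complete. -/
theorem stmt_6 :
    (∀ (γ : ℝ → Fin 3 → ℝ) (t : ℝ), HasDerivAt γ (F1aff (γ t)) t →
        HasDerivAt (fun u => (γ u 0) ^ 2 + (γ u 1) ^ 2 + (γ u 2) ^ 2) 0 t) ∧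
    (∀ v : Fin 3 → ℝ, ∃ γ : ℝ → Fin 3 → ℝ, γ 0 = v ∧
        (∀ t, HasDerivAt γ (F1aff (γ t)) t) ∧ ∃ C, ∀ t, ‖γ t‖ ≤ C) := by
  constructor
  · intro γ t h
    rw [hasDerivAt_pi] at h
    have h0 := h 0; have h1 := h 1; have h2 := h 2
    simp only [F1aff, Matrix.cons_val_zero, Matrix.cons_val_one, Matrix.head_cons,
      Matrix.cons_val_two, Matrix.tail_cons] at h0 h1 h2
    have := ((h0.fun_pow 2).add (h1.fun_pow 2)).add (h2.fun_pow 2)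
    refine this.congr_deriv ?_
    ring
  · intro v
    by_cases hy : v 1 = 0
    · refine ⟨fun _ => v, rfl, fun t => ?_, ‖v‖, fun t => le_rfl⟩
      have : F1aff v = 0 := by
        funext i; fin_cases i <;> simp [F1aff, hy]
      rw [this]
      exact hasDerivAt_const t v
    · set x0 := v 0 with hx0
      set y0 := v 1 with hy0
      set z0 := v 2 with hz0
      set a := Real.sqrt (x0 ^ 2 + y0 ^ 2) with ha
      set b := Real.arsinh (-x0 / |y0|) with hb
      set e := y0 * Real.cosh b with hedef
      have hy' : |y0| ≠ 0 := abs_ne_zero.2 hy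
      have hy2 : (0:ℝ) < y0 ^ 2 := by positivity
      have ha2 : a ^ 2 = x0 ^ 2 + y0 ^ 2 := Real.sq_sqrt (by positivity)
      have hane : a ≠ 0 := by
        intro h; rw [h] at ha2; nlinarith
      have hcb2 : Real.cosh b ^ 2 = 1 + (-x0 / |y0|) ^ 2 := by
        rw [hb, Real.cosh_arsinh]
        exact Real.sq_sqrt (by positivity)
      have hsb : Real.sinh b = -x0 / |y0| := by rw [hb, Real.sinh_arsinh]
      have hcb : Real.cosh b = a / |y0| := by
        have h1 : (a / |y0|) ^ 2 = 1 + (-x0 / |y0|) ^ 2 := by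
          rw [div_pow, ha2]
          field_simp [sq_abs]
          rw [sq_abs]
          ring
        have h2 : (0:ℝ) ≤ a / |y0| := by positivity
        nlinarith [Real.cosh_pos b, hcb2]
      have he : e ^ 2 = a ^ 2 := by
        rw [hedef, hcb]
        field_simp [sq_abs]
        nlinarith [sq_abs y0, ha2]
      refine ⟨fun t => ![-a * (Real.sinh (a*t+b) / Real.cosh (a*t+b)),
          e / Real.cosh (a*t+b), z0], ?_, fun t => sol_hasDerivAt a b e z0 he t, ?_⟩
      · funext i
        fin_cases i
        · show -a * (Real.sinh (a*0+b) / Real.cosh (a*0+b)) = v 0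
          rw [show a*0+b = b by ring, hsb, hcb, ← hx0]
          field_simp
        · show e / Real.cosh (a*0+b) = v 1
          rw [show a*0+b = b by ring, hedef, ← hy0]
          field_simp [(Real.cosh_pos b).ne']
        · rfl
      · refine ⟨|a| + |e| + |z0|, fun t => ?_⟩
        rw [pi_norm_le_iff_of_nonneg (by positivity)]
        intro i
        have hCpos := Real.cosh_pos (a*t+b)
        have hC1 := Real.one_le_cosh (a*t+b)
        have hsc : |Real.sinh (a*t+b)| ≤ Real.cosh (a*t+b) := by
          nlinarith [Real.cosh_sq_sub_sinh_sq (a*t+b), sq_abs (Real.sinh (a*t+b)),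
            abs_nonneg (Real.sinh (a*t+b))]
        fin_cases i
        · show ‖-a * (Real.sinh (a*t+b) / Real.cosh (a*t+b))‖ ≤ _
          rw [Real.norm_eq_abs, abs_mul, abs_neg, abs_div, abs_of_pos hCpos]
          have : |Real.sinh (a*t+b)| / Real.cosh (a*t+b) ≤ 1 := by
            rw [div_le_one hCpos]; exact hsc
          have h2 := mul_le_mul_of_nonneg_left this (abs_nonneg a)
          rw [mul_one] at h2
          linarith [abs_nonneg e, abs_nonneg z0]
        · show ‖e / Real.cosh (a*t+b)‖ ≤ _
          rw [Real.norm_eq_abs, abs_div, abs_of_pos hCpos]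
          have : |e| / Real.cosh (a*t+b) ≤ |e| := by
            apply div_le_self (abs_nonneg e) hC1
          linarith [abs_nonneg a, abs_nonneg z0]
        · show ‖z0‖ ≤ _
          rw [Real.norm_eq_abs]
          linarith [abs_nonneg a, abs_nonneg e]
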